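/- Let G = (V,E) be a graph, X ⊆ V an independent-deletion-style set, and consider the maximum independent set problem. Then the maximum size of an independent set of G equals the maximum over independent subsets Y of X of (|Y| + α(G − (X ∪ N[Y]))), where α denotes the independence number. -/

import Mathlib

def IsIndepSet {V : Type*} (G : SimpleGraph V) (S : Set V) : Prop :=
  S.Pairwise fun u v => ¬ G.Adj u v

def closedNbhd {V : Type*} (G : SimpleGraph V) (Y : Set V) : Set V :=
  Y ∪ {w | ∃ v ∈ Y, G.Adj v w}

/-- Independence number of `G`. -/
noncomputable def indepNum {V : Type*} (G : SimpleGraph V) : ℕ :=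
  sSup {n | ∃ S : Set V, IsIndepSet G S ∧ S.ncard = n}

section helpers

variable {W : Type*} (G : SimpleGraph W)

lemma indepSet_ncard_bdd [Finite W] :
    BddAbove {n | ∃ S : Set W, IsIndepSet G S ∧ S.ncard = n} := by
  refine ⟨Nat.card W, ?_⟩
  rintro n ⟨S, -, rfl⟩
  exact (Set.ncard_le_ncard (Set.subset_univ S) Set.finite_univ).trans
    (Set.ncard_univ W).le

lemma indepSet_ncard_nonempty :
    {n | ∃ S : Set W, IsIndepSet G S ∧ S.ncard = n}.Nonempty :=
  ⟨0, ∅, Set.pairwise_empty _, Set.ncard_empty _⟩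

lemma le_indepNum [Finite W] {S : Set W} (h : IsIndepSet G S) :
    S.ncard ≤ indepNum G :=
  le_csSup (indepSet_ncard_bdd G) ⟨S, h, rfl⟩

lemma indepNum_le_card [Finite W] : indepNum G ≤ Nat.card W :=
  csSup_le (indepSet_ncard_nonempty G) (by
    rintro n ⟨S, -, rfl⟩
    exact (Set.ncard_le_ncard (Set.subset_univ S) Set.finite_univ).trans
      (Set.ncard_univ W).le)

lemma exists_indep_eq [Finite W] :
    ∃ S : Set W, IsIndepSet G S ∧ S.ncard = indepNum G :=
  Nat.sSup_mem (indepSet_ncard_nonempty G) (indepSet_ncard_bdd G)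

end helpers

/-- The independence number of `G` equals the maximum over independent subsets `Y` of `X`
of `|Y| + α(G - (X ∪ N[Y]))`. -/
theorem stmt14 {V : Type*} [Fintype V] (G : SimpleGraph V) (X : Set V) :
    indepNum G = sSup {m | ∃ Y ⊆ X, IsIndepSet G Y ∧
      m = Y.ncard + indepNum (G.induce (X ∪ closedNbhd G Y)ᶜ)} := by
  classical
  set B := {m | ∃ Y ⊆ X, IsIndepSet G Y ∧
      m = Y.ncard + indepNum (G.induce (X ∪ closedNbhd G Y)ᶜ)} with hB
  have hBne : B.Nonempty :=
    ⟨_, ∅, Set.empty_subset _, Set.pairwise_empty _, rfl⟩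
  have hBbdd : BddAbove B := by
    refine ⟨Nat.card V + Nat.card V, ?_⟩
    rintro m ⟨Y, hYX, hY, rfl⟩
    have h1 : Y.ncard ≤ Nat.card V :=
      (Set.ncard_le_ncard (Set.subset_univ Y) Set.finite_univ).trans
        (Set.ncard_univ V).le
    have h2 : indepNum (G.induce (X ∪ closedNbhd G Y)ᶜ) ≤ Nat.card V :=
      (indepNum_le_card _).trans
        (Nat.card_le_card_of_injective _ Subtype.val_injective)
    omega
  apply le_antisymm
  · refine csSup_le (indepSet_ncard_nonempty G) ?_
    rintro n ⟨S, hS, rfl⟩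
    set Y := S ∩ X with hYdef
    have hYX : Y ⊆ X := Set.inter_subset_right
    have hYind : IsIndepSet G Y := hS.mono Set.inter_subset_left
    set C := (X ∪ closedNbhd G Y)ᶜ with hC
    have hsplit : S = Y ∪ (S ∩ C) := by
      ext s
      constructor
      · intro hs
        by_cases hx : s ∈ X
        · exact Or.inl ⟨hs, hx⟩
        · refine Or.inr ⟨hs, ?_⟩
          rw [hC, Set.mem_compl_iff, Set.mem_union]
          push_neg
          refine ⟨hx, ?_⟩
          intro hcl
          rcases hcl with hmem | ⟨v, hv, hadj⟩
          · exact hx hmem.2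
          · exact hS hv.1 hs (fun h => G.irrefl (h ▸ hadj)) hadj
      · rintro (h | h)
        · exact h.1
        · exact h.1
    have hdisj : Disjoint Y (S ∩ C) := by
      refine Set.disjoint_left.mpr ?_
      rintro a ⟨_, haX⟩ ⟨_, haC⟩
      exact haC (Or.inl haX)
    have hTind : IsIndepSet (G.induce C) (Subtype.val ⁻¹' S) := by
      intro u hu v hv huv hadj
      exact hS hu hv (fun h => huv (Subtype.ext h)) hadj
    have hTcard : (Subtype.val ⁻¹' S : Set C).ncard = (S ∩ C).ncard := by
      rw [← Set.ncard_image_of_injective _ Subtype.val_injective,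
        Set.image_preimage_eq_inter_range, Subtype.range_val]
    have hmem : Y.ncard + indepNum (G.induce C) ∈ B := ⟨Y, hYX, hYind, rfl⟩
    calc S.ncard = Y.ncard + (S ∩ C).ncard := by
          conv_lhs => rw [hsplit]
          exact Set.ncard_union_eq hdisj (Set.toFinite _) (Set.toFinite _)
      _ ≤ Y.ncard + indepNum (G.induce C) := by
          have := hTcard ▸ le_indepNum (G.induce C) hTind
          omega
      _ ≤ sSup B := le_csSup hBbdd hmem
  · refine csSup_le hBne ?_
    rintro m ⟨Y, hYX, hY, rfl⟩
    set C := (X ∪ closedNbhd G Y)ᶜ with hC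
    obtain ⟨T, hTind, hTcard⟩ := exists_indep_eq (G.induce C)
    set S := Y ∪ Subtype.val '' T with hSdef
    have himg_sub : Subtype.val '' T ⊆ C := by
      rintro _ ⟨t, _, rfl⟩
      exact t.2
    have hnoadj : ∀ y ∈ Y, ∀ c ∈ C, ¬ G.Adj y c := by
      intro y hy c hc hadj
      exact hc (Or.inr (Or.inr ⟨y, hy, hadj⟩))
    have hSind : IsIndepSet G S := by
      rintro u hu v hv huv hadj
      rcases hu with hu | ⟨tu, htu, rfl⟩ <;> rcases hv with hv | ⟨tv, htv, rfl⟩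
      · exact hY hu hv huv hadj
      · exact hnoadj u hu _ tv.2 hadj
      · exact hnoadj _ hv _ tu.2 (G.adj_symm hadj)
      · exact hTind htu htv (fun h => huv (congrArg Subtype.val h)) hadj
    have hdisj : Disjoint Y (Subtype.val '' T) :=
      Set.disjoint_left.mpr (fun a ha hb => (himg_sub hb) (Or.inl (hYX ha)))
    have hcard : Y.ncard + indepNum (G.induce C) = S.ncard := by
      rw [hSdef, Set.ncard_union_eq hdisj (Set.toFinite _) (Set.toFinite _),
        Set.ncard_image_of_injective _ Subtype.val_injective, hTcard]
    rw [hcard]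
    exact le_indepNum G hSind
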